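/- arXiv:2501.11228 — 2 statements merged into one kernel-verified Lean document; each statement's English description precedes it below -/
import Mathlib

section
/- Let N ≥ 0, let (λ_i)_{i≥1} be defined from the Thue–Morse sequence by λ_{3k+1} = τ_{2k+1}+N, λ_{3k+2} = N, λ_{3k+3} = τ_{2k+2}+N, and let (λ̂_i)_{i≥1} be defined by λ̂_{3k+1} = 1−τ_{2k+1}+N, λ̂_{3k+2} = N, λ̂_{3k+3} = 1−τ_{2k+2}+N. Then for every n ≥ 0 and every 0 ≤ i < 3·2ⁿ: λ̂₁⋯λ̂_{3·2ⁿ−i} ≺ λ_{i+1}⋯λ_{3·2ⁿ} ≼ λ₁⋯λ_{3·2ⁿ−i}. -/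
lemma tau_le_one (τ : ℕ → ℕ) (hτ0 : τ 0 = 0) (hτe : ∀ i, τ (2 * i) = τ i)
    (hτo : ∀ i, τ (2 * i + 1) = 1 - τ i) : ∀ j, τ j ≤ 1 := by
  intro j
  induction j using Nat.strong_induction_on with
  | _ j ih =>
    rcases Nat.even_or_odd j with ⟨c, hc⟩ | ⟨c, hc⟩
    · have h : j = 2 * c := by omega
      subst h
      rcases Nat.eq_zero_or_pos c with h0 | h0
      · subst h0; simp [hτe, hτ0]
      · rw [hτe]; exact ih c (by omega)
    · have h : j = 2 * c + 1 := by omega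
      subst h; rw [hτo]; omega

lemma tau_one (τ : ℕ → ℕ) (hτ0 : τ 0 = 0)
    (hτo : ∀ i, τ (2 * i + 1) = 1 - τ i) : τ 1 = 1 := by
  have := hτo 0; simp [hτ0] at this; exact this

lemma tau_two (τ : ℕ → ℕ) (hτ0 : τ 0 = 0) (hτe : ∀ i, τ (2 * i) = τ i)
    (hτo : ∀ i, τ (2 * i + 1) = 1 - τ i) : τ 2 = 1 := by
  have h := hτe 1
  rw [show 2*1 = 2 from rfl] at h
  rw [h, tau_one τ hτ0 hτo]

lemma tau_pow2 (τ : ℕ → ℕ) (hτ0 : τ 0 = 0) (hτe : ∀ i, τ (2 * i) = τ i)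
    (hτo : ∀ i, τ (2 * i + 1) = 1 - τ i) : ∀ n, τ (2 ^ n) = 1 := by
  intro n
  induction n with
  | zero => simpa using tau_one τ hτ0 hτo
  | succ n ih => rw [show (2:ℕ) ^ (n+1) = 2 * 2 ^ n by ring, hτe, ih]

/-- At the first disagreement between τ and σ^m τ (m ≥ 1), the shift is smaller. -/
lemma lemT (τ : ℕ → ℕ) (hτ0 : τ 0 = 0) (hτe : ∀ i, τ (2 * i) = τ i)
    (hτo : ∀ i, τ (2 * i + 1) = 1 - τ i) :
    ∀ m, 1 ≤ m → ∀ u, 1 ≤ u → (∀ v, v < u → τ (m + v) = τ v) → τ (m + u) ≤ τ u := by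
  intro m
  induction m using Nat.strong_induction_on with
  | _ m ih =>
    intro hm u hu hag
    rcases Nat.even_or_odd m with ⟨c, hc⟩ | ⟨c, hc⟩
    · have hm2 : m = 2 * c := by omega
      have hc1 : 1 ≤ c := by omega
      rcases Nat.even_or_odd u with ⟨d, hd⟩ | ⟨d, hd⟩
      · have hu2 : u = 2 * d := by omega
        have hd1 : 1 ≤ d := by omega
        have hagc : ∀ v, v < d → τ (c + v) = τ v := by
          intro v hv
          have h := hag (2 * v) (by omega)
          rw [show m + 2 * v = 2 * (c + v) by omega, hτe, hτe] at h
          exact h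
        have key := ih c (by omega) hc1 d hd1 hagc
        rw [show m + u = 2 * (c + d) by omega, hτe, hu2, hτe]
        exact key
      · have hu2 : u = 2 * d + 1 := by omega
        have h := hag (2 * d) (by omega)
        rw [show m + 2 * d = 2 * (c + d) by omega, hτe, hτe] at h
        rw [show m + u = 2 * (c + d) + 1 by omega, hτo, hu2, hτo, h]
    · have hm2 : m = 2 * c + 1 := by omega
      by_cases h3 : 3 ≤ u
      · exfalso
        have hA := hag 1 (by omega)
        have hB := hag 2 (by omega)
        rw [show m + 1 = 2 * (c + 1) by omega, hτe, tau_one τ hτ0 hτo] at hA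
        rw [show m + 2 = 2 * (c + 1) + 1 by omega, hτo, tau_two τ hτ0 hτe hτo] at hB
        omega
      · have hle := tau_le_one τ hτ0 hτe hτo (m + u)
        have h12 : u = 1 ∨ u = 2 := by omega
        rcases h12 with h | h <;> subst h
        · rw [tau_one τ hτ0 hτo]; exact hle
        · rw [tau_two τ hτ0 hτe hτo]; exact hle

/-- For m < 2ⁿ there is w with complement-agreement before w, agreement at w,
    and if w ≥ 1 then τ w = 1 and m + w ≤ 2ⁿ. -/
lemma lemS (τ : ℕ → ℕ) (hτ0 : τ 0 = 0) (hτe : ∀ i, τ (2 * i) = τ i)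
    (hτo : ∀ i, τ (2 * i + 1) = 1 - τ i) :
    ∀ n m, m < 2 ^ n → ∃ w, (∀ v, v < w → τ (m + v) = 1 - τ v) ∧ τ (m + w) = τ w ∧
      (w = 0 ∨ (τ w = 1 ∧ m + w ≤ 2 ^ n)) := by
  intro n
  induction n with
  | zero =>
    intro m hm
    have hm0 : m = 0 := by simpa using hm
    subst hm0
    exact ⟨0, by omega, rfl, Or.inl rfl⟩
  | succ n ih =>
    intro m hm
    have hpow : (2:ℕ) ^ (n+1) = 2 * 2 ^ n := by ring
    rcases Nat.even_or_odd m with ⟨c, hc⟩ | ⟨c, hc⟩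
    · have hm2 : m = 2 * c := by omega
      obtain ⟨w', hag, heq, hd⟩ := ih c (by omega)
      refine ⟨2 * w', ?_, ?_, ?_⟩
      · intro v hv
        rcases Nat.even_or_odd v with ⟨k, hk⟩ | ⟨k, hk⟩
        · have hv2 : v = 2 * k := by omega
          rw [show m + v = 2 * (c + k) by omega, hτe, hv2, hτe]
          exact hag k (by omega)
        · have hv2 : v = 2 * k + 1 := by omega
          rw [show m + v = 2 * (c + k) + 1 by omega, hτo, hv2, hτo, hag k (by omega)]
      · rw [show m + 2 * w' = 2 * (c + w') by omega, hτe, hτe]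
        exact heq
      · rcases hd with h0 | ⟨ht, hb⟩
        · left; omega
        · right
          refine ⟨?_, by omega⟩
          rw [hτe]; exact ht
    · have hm2 : m = 2 * c + 1 := by omega
      have htm : τ m = 1 - τ c := by rw [hm2, hτo]
      have hcle := tau_le_one τ hτ0 hτe hτo c
      by_cases h0 : τ c = 1
      · refine ⟨0, by omega, ?_, Or.inl rfl⟩
        rw [Nat.add_zero, htm, h0, hτ0]
      · have hτc : τ c = 0 := by omega
        have htm1 : τ m = 1 := by omega
        have hc1le := tau_le_one τ hτ0 hτe hτo (c + 1)
        by_cases h1 : τ (c + 1) = 1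
        · refine ⟨1, ?_, ?_, Or.inr ⟨tau_one τ hτ0 hτo, by omega⟩⟩
          · intro v hv
            have hv0 : v = 0 := by omega
            subst hv0
            rw [Nat.add_zero, htm1, hτ0]
          · rw [show m + 1 = 2 * (c + 1) by omega, hτe, h1, tau_one τ hτ0 hτo]
        · have h1' : τ (c + 1) = 0 := by omega
          have hmb : m + 2 ≤ 2 ^ (n + 1) := by
            by_contra hh
            have hcn : c + 1 = 2 ^ n := by omega
            have hp := tau_pow2 τ hτ0 hτe hτo n
            rw [← hcn] at hp
            omega
          refine ⟨2, ?_, ?_, Or.inr ⟨tau_two τ hτ0 hτe hτo, hmb⟩⟩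
          · intro v hv
            interval_cases v
            · rw [Nat.add_zero, htm1, hτ0]
            · rw [show m + 1 = 2 * (c + 1) by omega, hτe, h1', tau_one τ hτ0 hτo]
          · rw [show m + 2 = 2 * (c + 1) + 1 by omega, hτo, h1', tau_two τ hτ0 hτe hτo]

lemma lex_ofFn_of_firstdiff {M : ℕ} (f g : ℕ → ℕ) (t : ℕ) (ht : t < M)
    (heq : ∀ s, s < t → f s = g s) (hlt : f t < g t) :
    List.Lex (· < ·) (List.ofFn (fun j : Fin M => f j)) (List.ofFn (fun j : Fin M => g j)) := by
  induction M generalizing f g t with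
  | zero => omega
  | succ M ih =>
    rw [List.ofFn_succ, List.ofFn_succ]
    cases t with
    | zero => exact List.Lex.rel hlt
    | succ t =>
      have h0 : f 0 = g 0 := heq 0 (by omega)
      simp only [Fin.val_zero, Fin.val_succ, h0]
      exact List.Lex.cons (ih (fun s => f (s + 1)) (fun s => g (s + 1)) t (by omega)
        (fun s hs => heq (s + 1) (by omega)) hlt)

lemma ofFn_eq_of_eq {M : ℕ} (f g : ℕ → ℕ) (h : ∀ s, s < M → f s = g s) :
    List.ofFn (fun j : Fin M => f j) = List.ofFn (fun j : Fin M => g j) := by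
  have he : (fun j : Fin M => f j) = fun j : Fin M => g j :=
    funext fun j => h j j.2
  rw [he]

/-- λ̂₁⋯λ̂_{3·2ⁿ−i} ≺ λ_{i+1}⋯λ_{3·2ⁿ} ≼ λ₁⋯λ_{3·2ⁿ−i}. -/
theorem lambda_lex_inequalities (N : ℕ) (τ : ℕ → ℕ)
    (hτ0 : τ 0 = 0) (hτe : ∀ i, τ (2 * i) = τ i) (hτo : ∀ i, τ (2 * i + 1) = 1 - τ i)
    (lam lamh : ℕ → ℕ)
    (h1 : ∀ k, lam (3 * k + 1) = τ (2 * k + 1) + N)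
    (h2 : ∀ k, lam (3 * k + 2) = N)
    (h3 : ∀ k, lam (3 * k + 3) = τ (2 * k + 2) + N)
    (g1 : ∀ k, lamh (3 * k + 1) = 1 - τ (2 * k + 1) + N)
    (g2 : ∀ k, lamh (3 * k + 2) = N)
    (g3 : ∀ k, lamh (3 * k + 3) = 1 - τ (2 * k + 2) + N)
    (n i : ℕ) (hi : i < 3 * 2 ^ n) :
    List.Lex (· < ·)
        (List.ofFn (fun t : Fin (3 * 2 ^ n - i) => lamh ((t : ℕ) + 1)))
        (List.ofFn (fun t : Fin (3 * 2 ^ n - i) => lam (i + (t : ℕ) + 1))) ∧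
      (List.Lex (· < ·)
          (List.ofFn (fun t : Fin (3 * 2 ^ n - i) => lam (i + (t : ℕ) + 1)))
          (List.ofFn (fun t : Fin (3 * 2 ^ n - i) => lam ((t : ℕ) + 1))) ∨
        (List.ofFn (fun t : Fin (3 * 2 ^ n - i) => lam (i + (t : ℕ) + 1))) =
          (List.ofFn (fun t : Fin (3 * 2 ^ n - i) => lam ((t : ℕ) + 1)))) := by
  have hle := tau_le_one τ hτ0 hτe hτo
  have t1 := tau_one τ hτ0 hτo
  have t2 := tau_two τ hτ0 hτe hτo
  have tp := tau_pow2 τ hτ0 hτe hτo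
  have A0 : ∀ k, lam (3 * k + 1) = 1 - τ k + N := by
    intro k; rw [h1, hτo]
  have A2 : ∀ k, lam (3 * k + 3) = τ (k + 1) + N := by
    intro k; rw [h3, show 2 * k + 2 = 2 * (k + 1) by ring, hτe]
  have B0 : ∀ k, lamh (3 * k + 1) = τ k + N := by
    intro k; rw [g1, hτo]; have := hle k; omega
  have B2 : ∀ k, lamh (3 * k + 3) = 1 - τ (k + 1) + N := by
    intro k; rw [g3, show 2 * k + 2 = 2 * (k + 1) by ring, hτe]
  obtain ⟨m, hm⟩ : ∃ m, i = 3 * m ∨ i = 3 * m + 1 ∨ i = 3 * m + 2 := ⟨i / 3, by omega⟩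
  constructor
  · -- Part 1 : lamh ≺ shifted lam
    rcases hm with hm | hm | hm
    · -- i = 3m
      have hmn : m < 2 ^ n := by omega
      obtain ⟨w, hag, heqw, hd⟩ := lemS τ hτ0 hτe hτo n m hmn
      rcases Nat.eq_zero_or_pos w with hw0 | hw1
      · subst hw0
        rw [Nat.add_zero] at heqw
        have hτm : τ m = 0 := by rw [heqw, hτ0]
        refine lex_ofFn_of_firstdiff (fun s => lamh (s + 1)) (fun s => lam (i + s + 1)) 0
          (by omega) (fun s hs => absurd hs (Nat.not_lt_zero s)) ?_
        show lamh (0 + 1) < lam (i + 0 + 1)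
        rw [show (0:ℕ) + 1 = 3 * 0 + 1 from rfl, B0, show i + 0 + 1 = 3 * m + 1 by omega, A0,
          hτ0, hτm]
        omega
      · obtain ⟨hτw, hwb⟩ := hd.resolve_left (by omega)
        obtain ⟨w', rfl⟩ : ∃ w', w = w' + 1 := ⟨w - 1, by omega⟩
        refine lex_ofFn_of_firstdiff (fun s => lamh (s + 1)) (fun s => lam (i + s + 1))
          (3 * w' + 2) (by omega) ?_ ?_
        · intro s hs
          obtain ⟨k, hk⟩ : ∃ k, s = 3 * k ∨ s = 3 * k + 1 ∨ s = 3 * k + 2 := ⟨s / 3, by omega⟩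
          rcases hk with hk | hk | hk
          · have hkw : k < w' + 1 := by omega
            show lamh (s + 1) = lam (i + s + 1)
            rw [show s + 1 = 3 * k + 1 by omega, B0, show i + s + 1 = 3 * (m + k) + 1 by omega,
              A0, hag k hkw]
            have := hle k; omega
          · show lamh (s + 1) = lam (i + s + 1)
            rw [show s + 1 = 3 * k + 2 by omega, g2, show i + s + 1 = 3 * (m + k) + 2 by omega,
              h2]
          · have hkw : k + 1 < w' + 1 := by omega
            show lamh (s + 1) = lam (i + s + 1)
            rw [show s + 1 = 3 * k + 3 by omega, B2, show i + s + 1 = 3 * (m + k) + 3 by omega,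
              A2, show m + k + 1 = m + (k + 1) by omega, hag (k + 1) hkw]
        · show lamh (3 * w' + 2 + 1) < lam (i + (3 * w' + 2) + 1)
          rw [show 3 * w' + 2 + 1 = 3 * w' + 3 from rfl, B2,
            show i + (3 * w' + 2) + 1 = 3 * (m + w') + 3 by omega, A2,
            show m + w' + 1 = m + (w' + 1) by omega, heqw, hτw]
          omega
    · -- i = 3m + 1
      by_cases hp1 : τ (m + 1) = 1
      · refine lex_ofFn_of_firstdiff (fun s => lamh (s + 1)) (fun s => lam (i + s + 1)) 1
          (by omega) ?_ ?_
        · intro s hs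
          have hs0 : s = 0 := by omega
          subst hs0
          show lamh (0 + 1) = lam (i + 0 + 1)
          rw [show (0:ℕ) + 1 = 3 * 0 + 1 from rfl, B0, hτ0,
            show i + 0 + 1 = 3 * m + 2 by omega, h2]
          omega
        · show lamh (1 + 1) < lam (i + 1 + 1)
          rw [show (1:ℕ) + 1 = 3 * 0 + 2 from rfl, g2, show i + 1 + 1 = 3 * m + 3 by omega,
            A2, hp1]
          omega
      · have hp0 : τ (m + 1) = 0 := by have := hle (m + 1); omega
        have hbound : m + 1 < 2 ^ n := by
          rcases Nat.lt_or_ge (m + 1) (2 ^ n) with h | h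
          · exact h
          · exfalso
            have hmn : m + 1 = 2 ^ n := by omega
            rw [hmn, tp n] at hp0
            omega
        refine lex_ofFn_of_firstdiff (fun s => lamh (s + 1)) (fun s => lam (i + s + 1)) 2
          (by omega) ?_ ?_
        · intro s hs
          have hs01 : s = 0 ∨ s = 1 := by omega
          rcases hs01 with hs0 | hs0 <;> subst hs0
          · show lamh (0 + 1) = lam (i + 0 + 1)
            rw [show (0:ℕ) + 1 = 3 * 0 + 1 from rfl, B0, hτ0,
              show i + 0 + 1 = 3 * m + 2 by omega, h2]
            omega
          · show lamh (1 + 1) = lam (i + 1 + 1)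
            rw [show (1:ℕ) + 1 = 3 * 0 + 2 from rfl, g2, show i + 1 + 1 = 3 * m + 3 by omega,
              A2, hp0]
            omega
        · show lamh (2 + 1) < lam (i + 2 + 1)
          rw [show (2:ℕ) + 1 = 3 * 0 + 3 from rfl, B2, show (0:ℕ) + 1 = 1 from rfl, t1,
            show i + 2 + 1 = 3 * (m + 1) + 1 by omega, A0, hp0]
          omega
    · -- i = 3m + 2
      by_cases hp1 : τ (m + 1) = 1
      · refine lex_ofFn_of_firstdiff (fun s => lamh (s + 1)) (fun s => lam (i + s + 1)) 0
          (by omega) (fun s hs => absurd hs (Nat.not_lt_zero s)) ?_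
        show lamh (0 + 1) < lam (i + 0 + 1)
        rw [show (0:ℕ) + 1 = 3 * 0 + 1 from rfl, B0, hτ0,
          show i + 0 + 1 = 3 * m + 3 by omega, A2, hp1]
        omega
      · have hp0 : τ (m + 1) = 0 := by have := hle (m + 1); omega
        have hbound : m + 1 < 2 ^ n := by
          rcases Nat.lt_or_ge (m + 1) (2 ^ n) with h | h
          · exact h
          · exfalso
            have hmn : m + 1 = 2 ^ n := by omega
            rw [hmn, tp n] at hp0
            omega
        refine lex_ofFn_of_firstdiff (fun s => lamh (s + 1)) (fun s => lam (i + s + 1)) 1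
          (by omega) ?_ ?_
        · intro s hs
          have hs0 : s = 0 := by omega
          subst hs0
          show lamh (0 + 1) = lam (i + 0 + 1)
          rw [show (0:ℕ) + 1 = 3 * 0 + 1 from rfl, B0, hτ0,
            show i + 0 + 1 = 3 * m + 3 by omega, A2, hp0]
        · show lamh (1 + 1) < lam (i + 1 + 1)
          rw [show (1:ℕ) + 1 = 3 * 0 + 2 from rfl, g2,
            show i + 1 + 1 = 3 * (m + 1) + 1 by omega, A0, hp0]
          omega
  · -- Part 2 : shifted lam ≼ lam
    rcases hm with hm | hm | hm
    · -- i = 3m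
      by_cases hall : ∀ s, s < 3 * 2 ^ n - i → lam (i + s + 1) = lam (s + 1)
      · right
        exact ofFn_eq_of_eq (fun s => lam (i + s + 1)) (fun s => lam (s + 1)) hall
      · left
        push_neg at hall
        obtain ⟨s₀, hs₀M, hs₀ne⟩ := hall
        have hex : ∃ s, s < 3 * 2 ^ n - i ∧ lam (i + s + 1) ≠ lam (s + 1) := ⟨s₀, hs₀M, hs₀ne⟩
        obtain ⟨htM, htne⟩ := Nat.find_spec hex
        set t := Nat.find hex with htdef
        have hmin : ∀ s, s < t → lam (i + s + 1) = lam (s + 1) := by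
          intro s hs
          have h := Nat.find_min hex hs
          push_neg at h
          exact h (by omega)
        refine lex_ofFn_of_firstdiff (fun s => lam (i + s + 1)) (fun s => lam (s + 1)) t htM
          hmin ?_
        show lam (i + t + 1) < lam (t + 1)
        obtain ⟨k, hk⟩ : ∃ k, t = 3 * k ∨ t = 3 * k + 1 ∨ t = 3 * k + 2 := ⟨t / 3, by omega⟩
        rcases hk with hk | hk | hk
        · rcases Nat.eq_zero_or_pos k with hk0 | hk1
          · have e1 : lam (i + t + 1) = 1 - τ m + N := by
              rw [show i + t + 1 = 3 * m + 1 by omega, A0]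
            have e2 : lam (t + 1) = 1 - τ 0 + N := by
              rw [show t + 1 = 3 * 0 + 1 by omega, A0]
            rw [e1, e2] at htne ⊢
            have := hle m
            rw [hτ0] at htne ⊢
            omega
          · exfalso
            obtain ⟨k', rfl⟩ : ∃ k', k = k' + 1 := ⟨k - 1, by omega⟩
            have h := hmin (3 * k' + 2) (by omega)
            rw [show i + (3 * k' + 2) + 1 = 3 * (m + k') + 3 by omega, A2,
              show 3 * k' + 2 + 1 = 3 * k' + 3 from rfl, A2] at h
            have e1 : lam (i + t + 1) = 1 - τ (m + k' + 1) + N := by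
              rw [show i + t + 1 = 3 * (m + k' + 1) + 1 by omega, A0]
            have e2 : lam (t + 1) = 1 - τ (k' + 1) + N := by
              rw [show t + 1 = 3 * (k' + 1) + 1 by omega, A0]
            rw [e1, e2] at htne
            omega
        · exfalso
          have e1 : lam (i + t + 1) = N := by
            rw [show i + t + 1 = 3 * (m + k) + 2 by omega, h2]
          have e2 : lam (t + 1) = N := by
            rw [show t + 1 = 3 * k + 2 by omega, h2]
          rw [e1, e2] at htne
          exact htne rfl
        · have hm1 : 1 ≤ m := by
            rcases Nat.eq_zero_or_pos m with h | h
            · exfalso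
              apply htne
              congr 1
              omega
            · exact h
          have hag : ∀ v, v < k + 1 → τ (m + v) = τ v := by
            intro v hv
            rcases Nat.eq_zero_or_pos v with hv0 | hv1
            · subst hv0
              have h := hmin 0 (by omega)
              rw [show i + 0 + 1 = 3 * m + 1 by omega, A0,
                show (0:ℕ) + 1 = 3 * 0 + 1 from rfl, A0, hτ0] at h
              have := hle m
              rw [Nat.add_zero, hτ0]
              omega
            · obtain ⟨v', rfl⟩ : ∃ v', v = v' + 1 := ⟨v - 1, by omega⟩
              have h := hmin (3 * v' + 2) (by omega)
              rw [show i + (3 * v' + 2) + 1 = 3 * (m + v') + 3 by omega, A2,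
                show 3 * v' + 2 + 1 = 3 * v' + 3 from rfl, A2] at h
              rw [show m + (v' + 1) = m + v' + 1 by omega]
              omega
          have key := lemT τ hτ0 hτe hτo m hm1 (k + 1) (by omega) hag
          have e1 : lam (i + t + 1) = τ (m + k + 1) + N := by
            rw [show i + t + 1 = 3 * (m + k) + 3 by omega, A2]
          have e2 : lam (t + 1) = τ (k + 1) + N := by
            rw [show t + 1 = 3 * k + 3 by omega, A2]
          rw [e1, e2] at htne ⊢
          rw [show m + (k + 1) = m + k + 1 by omega] at key
          omega
    · -- i = 3m + 1
      left
      refine lex_ofFn_of_firstdiff (fun s => lam (i + s + 1)) (fun s => lam (s + 1)) 0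
        (by omega) (fun s hs => absurd hs (Nat.not_lt_zero s)) ?_
      show lam (i + 0 + 1) < lam (0 + 1)
      rw [show i + 0 + 1 = 3 * m + 2 by omega, h2, show (0:ℕ) + 1 = 3 * 0 + 1 from rfl, A0, hτ0]
      omega
    · -- i = 3m + 2
      by_cases hp : τ (m + 1) = 0
      · left
        refine lex_ofFn_of_firstdiff (fun s => lam (i + s + 1)) (fun s => lam (s + 1)) 0
          (by omega) (fun s hs => absurd hs (Nat.not_lt_zero s)) ?_
        show lam (i + 0 + 1) < lam (0 + 1)
        rw [show i + 0 + 1 = 3 * m + 3 by omega, A2, hp,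
          show (0:ℕ) + 1 = 3 * 0 + 1 from rfl, A0, hτ0]
        omega
      · have hp1 : τ (m + 1) = 1 := by have := hle (m + 1); omega
        by_cases hM : 3 * 2 ^ n - i = 1
        · right
          apply ofFn_eq_of_eq (fun s => lam (i + s + 1)) (fun s => lam (s + 1))
          intro s hs
          have hs0 : s = 0 := by omega
          subst hs0
          show lam (i + 0 + 1) = lam (0 + 1)
          rw [show i + 0 + 1 = 3 * m + 3 by omega, A2, hp1,
            show (0:ℕ) + 1 = 3 * 0 + 1 from rfl, A0, hτ0]
        · left
          have hM4 : 2 < 3 * 2 ^ n - i := by omega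
          refine lex_ofFn_of_firstdiff (fun s => lam (i + s + 1)) (fun s => lam (s + 1)) 2
            hM4 ?_ ?_
          · intro s hs
            have hs01 : s = 0 ∨ s = 1 := by omega
            rcases hs01 with hs0 | hs0 <;> subst hs0
            · show lam (i + 0 + 1) = lam (0 + 1)
              rw [show i + 0 + 1 = 3 * m + 3 by omega, A2, hp1,
                show (0:ℕ) + 1 = 3 * 0 + 1 from rfl, A0, hτ0]
            · show lam (i + 1 + 1) = lam (1 + 1)
              rw [show i + 1 + 1 = 3 * (m + 1) + 1 by omega, A0, hp1,
                show (1:ℕ) + 1 = 3 * 0 + 2 from rfl, h2]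
              omega
          · show lam (i + 2 + 1) < lam (2 + 1)
            rw [show i + 2 + 1 = 3 * (m + 1) + 2 by omega, h2,
              show (2:ℕ) + 1 = 3 * 0 + 3 from rfl, A2, show (0:ℕ) + 1 = 1 from rfl, t1]
            omega
end

section
/- Define words a_n over the alphabet Ω_M (M = 3N+1) by a₀ = α_{(N+1)N} α_{N(N+1)} α_{NN} and a_{n+1} = a_n⁺ Φ₁(a_n⁺), where a_n⁺ changes the final letter α_{NN} to α_{(N+1)N}, and Φ₁ is the blockwise involution on length-3 blocks swapping α_{(N+1)N}α_{N(N+1)}α_{(N+1)N} ↔ α_{NN}α_{N(N+1)}α_{NN} and α_{(N+1)N}α_{N(N+1)}α_{NN} ↔ α_{NN}α_{N(N+1)}α_{(N+1)N}. Write a_n = a₁⋯a_{3·2ⁿ} with a_i = (a_i¹, a_i²) ∈ ℕ². Then the first-coordinate word a_n¹ = a₁¹⋯a_{3·2ⁿ}¹ equals t_n, the second-coordinate word equals (N(N+1)N)^{2ⁿ}, and the word (M − a_i¹ − a_i²)_{i=1}^{3·2ⁿ} equals φ₁(t_n), where t₀ = (N+1)NN, t_{n+1} = t_n⁺φ₁(t_n⁺),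 and φ₁ swaps (N+1)N(N+1) ↔ NNN, (N+1)NN ↔ NN(N+1) blockwise. -/
/-- Flip a letter between N and N+1. -/
def flipLetter (N x : ℕ) : ℕ := if x = N then N + 1 else N

/-- The blockwise involution φ₁ swapping (N+1)N(N+1) ↔ NNN and (N+1)NN ↔ NN(N+1). -/
def phi1 (N : ℕ) : List ℕ → List ℕ
  | a :: b :: c :: rest => flipLetter N a :: b :: flipLetter N c :: phi1 N rest
  | l => l

/-- Increase the last letter of a word by 1. -/
def plusWord : List ℕ → List ℕ
  | [] => []
  | [a] => [a + 1]
  | a :: b :: rest => a :: plusWord (b :: rest)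

/-- The words t_n: t₀ = (N+1)NN, t_{n+1} = t_n⁺ φ₁(t_n⁺). -/
def tword (N : ℕ) : ℕ → List ℕ
  | 0 => [N + 1, N, N]
  | n + 1 => plusWord (tword N n) ++ phi1 N (plusWord (tword N n))

/-- Flip a pair-letter between α_{(N+1)N} = (N+1,N) and α_{NN} = (N,N). -/
def flipPair (N : ℕ) (p : ℕ × ℕ) : ℕ × ℕ :=
  if p = (N + 1, N) then (N, N) else (N + 1, N)

/-- The blockwise involution Φ₁ on words over Ω_M: it flips the first and third
letters of each length-3 block between (N+1,N) and (N,N) and keeps the middle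
letter, realizing the swaps
α_{(N+1)N}α_{N(N+1)}α_{(N+1)N} ↔ α_{NN}α_{N(N+1)}α_{NN} and
α_{(N+1)N}α_{N(N+1)}α_{NN} ↔ α_{NN}α_{N(N+1)}α_{(N+1)N}. -/
def PhiOne (N : ℕ) : List (ℕ × ℕ) → List (ℕ × ℕ)
  | a :: b :: c :: rest => flipPair N a :: b :: flipPair N c :: PhiOne N rest
  | l => l

/-- Replace the final letter α_{NN} of a word by α_{(N+1)N}. -/
def plusPairWord (N : ℕ) : List (ℕ × ℕ) → List (ℕ × ℕ)
  | [] => []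
  | [_] => [(N + 1, N)]
  | a :: b :: rest => a :: plusPairWord N (b :: rest)

/-- The words a_n: a₀ = α_{(N+1)N}α_{N(N+1)}α_{NN}, a_{n+1} = a_n⁺ Φ₁(a_n⁺). -/
def aword (N : ℕ) : ℕ → List (ℕ × ℕ)
  | 0 => [(N + 1, N), (N, N + 1), (N, N)]
  | n + 1 => plusPairWord N (aword N n) ++ PhiOne N (plusPairWord N (aword N n))

-- auxiliary

/-- `Good N e t` : `t` is a nonempty concatenation of blocks `a N c` with
`a, c ∈ {N, N+1}`, and the final letter of `t` is `e`. -/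
inductive Good (N : ℕ) : ℕ → List ℕ → Prop
  | base (a c : ℕ) (ha : a = N ∨ a = N + 1) (hc : c = N ∨ c = N + 1) :
      Good N c [a, N, c]
  | cons (a c e : ℕ) (ha : a = N ∨ a = N + 1) (hc : c = N ∨ c = N + 1)
      (rest : List ℕ) (h : Good N e rest) : Good N e (a :: N :: c :: rest)

def pairify (N : ℕ) : List ℕ → List (ℕ × ℕ)
  | a :: b :: c :: rest => (a, N) :: (b, N + 1) :: (c, N) :: pairify N rest
  | _ => []

lemma good_shape {N e t} (h : Good N e t) :
    ∃ a c rest, (a = N ∨ a = N + 1) ∧ (c = N ∨ c = N + 1) ∧ t = a :: N :: c :: rest := by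
  cases h with
  | base a c ha hc => exact ⟨a, e, [], ha, hc, rfl⟩
  | cons a c e ha hc h => exact ⟨a, c, _, ha, hc, rfl⟩

lemma good_append {N e₁ e₂ s t} (hs : Good N e₁ s) (ht : Good N e₂ t) :
    Good N e₂ (s ++ t) := by
  induction hs with
  | base a c ha hc => exact .cons a c e₂ ha hc t ht
  | cons a c e ha hc rest h ih => exact .cons a c e₂ ha hc _ ih

lemma flip_mem {N a : ℕ} : flipLetter N a = N ∨ flipLetter N a = N + 1 := by
  unfold flipLetter; split <;> simp

lemma good_phi1 {N e t} (h : Good N e t) : Good N (flipLetter N e) (phi1 N t) := by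
  induction h with
  | base a c ha hc =>
      simpa [phi1] using Good.base (flipLetter N a) (flipLetter N c) flip_mem flip_mem
  | cons a c e ha hc rest h ih =>
      simpa [phi1] using Good.cons (flipLetter N a) (flipLetter N c) _ flip_mem flip_mem _ ih

lemma good_plus_aux {N e t} (h : Good N e t) :
    e = N → Good N (N + 1) (plusWord t) := by
  induction h with
  | base a c ha hc =>
      intro he
      simp only [plusWord]
      have h1 : c + 1 = N + 1 := by omega
      rw [h1]
      exact Good.base a (N + 1) ha (by omega)
  | cons a c e ha hc rest h ih =>
      intro he
      obtain ⟨a', c', rest', _, _, rfl⟩ := good_shape h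
      simp only [plusWord]
      exact Good.cons a c (N + 1) ha hc _ (ih he)

lemma good_plus {N t} (h : Good N N t) : Good N (N + 1) (plusWord t) :=
  good_plus_aux h rfl

lemma good_tword (N n : ℕ) : Good N N (tword N n) := by
  induction n with
  | zero => exact .base (N + 1) N (by omega) (by omega)
  | succ n ih =>
      have h1 := good_plus ih
      have h2 := good_phi1 h1
      have : flipLetter N (N + 1) = N := by unfold flipLetter; simp
      rw [this] at h2
      exact good_append h1 h2

lemma pairify_fst {N e t} (h : Good N e t) : (pairify N t).map Prod.fst = t := by
  induction h with
  | base a c ha hc => simp [pairify]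
  | cons a c e ha hc rest h ih => simp [pairify, ih]

lemma pairify_snd {N e t} (h : Good N e t) : ∀ k, t.length = 3 * k →
    (pairify N t).map Prod.snd = List.flatten (List.replicate k [N, N + 1, N]) := by
  induction h with
  | base a c ha hc =>
      rintro (_ | ⟨k⟩) hk
      · simp at hk
      · have : k = 0 := by simp at hk; omega
        subst this; simp [pairify]
  | cons a c e ha hc rest h ih =>
      rintro (_ | ⟨k⟩) hk
      · simp at hk
      · have hr : rest.length = 3 * k := by simp at hk; omega
        simp [pairify, List.replicate_succ, ih k hr]

lemma pairify_third {N e t} (h : Good N e t) :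
    (pairify N t).map (fun p => 3 * N + 1 - p.1 - p.2) = phi1 N t := by
  induction h with
  | base a c ha hc =>
      simp only [pairify, phi1, List.map]
      rcases ha with rfl | rfl <;> rcases hc with rfl | rfl <;>
        simp [flipLetter] <;> omega
  | cons a c e ha hc rest h ih =>
      simp only [pairify, phi1, List.map, ih]
      rcases ha with rfl | rfl <;> rcases hc with rfl | rfl <;>
        simp [flipLetter] <;> omega

lemma flipPair_eq {N a : ℕ} (ha : a = N ∨ a = N + 1) :
    flipPair N (a, N) = (flipLetter N a, N) := by
  rcases ha with rfl | rfl <;> simp [flipPair, flipLetter]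

lemma pairify_PhiOne {N e t} (h : Good N e t) :
    PhiOne N (pairify N t) = pairify N (phi1 N t) := by
  induction h with
  | base a c ha hc =>
      simp [pairify, PhiOne, phi1, flipPair_eq ha, flipPair_eq hc]
  | cons a c e ha hc rest h ih =>
      simp [pairify, PhiOne, phi1, flipPair_eq ha, flipPair_eq hc, ih]

lemma pairify_plus_aux {N e t} (h : Good N e t) :
    e = N → plusPairWord N (pairify N t) = pairify N (plusWord t) := by
  induction h with
  | base a c ha hc =>
      intro he
      subst he
      simp [pairify, plusWord, plusPairWord]
  | cons a c e ha hc rest h ih =>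
      intro he
      obtain ⟨a', c', rest', _, _, rfl⟩ := good_shape h
      simp only [pairify, plusWord, plusPairWord] at *
      simp [ih he]

lemma pairify_plus {N t} (h : Good N N t) :
    plusPairWord N (pairify N t) = pairify N (plusWord t) :=
  pairify_plus_aux h rfl

lemma aword_pairify (N n : ℕ) : aword N n = pairify N (tword N n) := by
  induction n with
  | zero => simp [aword, tword, pairify]
  | succ n ih =>
      have hg := good_tword N n
      have h1 : plusPairWord N (aword N n) = pairify N (plusWord (tword N n)) := by
        rw [ih]; exact pairify_plus hg
      have hgp := good_plus hg
      have h2 : PhiOne N (plusPairWord N (aword N n)) =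
          pairify N (phi1 N (plusWord (tword N n))) := by
        rw [h1]; exact pairify_PhiOne hgp
      have h3 : ∀ {e s e' s'}, Good N e s → Good N e' s' →
          pairify N s ++ pairify N s' = pairify N (s ++ s') := by
        intro e s e' s' hs hs'
        induction hs with
        | base a c ha hc =>
            obtain ⟨a', c', rest', _, _, rfl⟩ := good_shape hs'
            simp [pairify]
        | cons a c e ha hc rest h ih => simp [pairify, ih]
      show plusPairWord N (aword N n) ++ PhiOne N (plusPairWord N (aword N n)) = _
      rw [h2, h1, tword]
      exact h3 hgp (good_phi1 hgp)

lemma plusWord_length : ∀ t : List ℕ, (plusWord t).length = t.length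
  | [] => rfl
  | [a] => rfl
  | a :: b :: rest => by
      simp only [plusWord, List.length_cons, plusWord_length (b :: rest)]

lemma phi1_length (N : ℕ) : ∀ t : List ℕ, (phi1 N t).length = t.length
  | [] => rfl
  | [a] => rfl
  | [a, b] => rfl
  | a :: b :: c :: rest => by
      simp only [phi1, List.length_cons, phi1_length N rest]

lemma tword_length (N n : ℕ) : (tword N n).length = 3 * 2 ^ n := by
  induction n with
  | zero => rfl
  | succ n ih =>
      simp only [tword, List.length_append, plusWord_length, phi1_length, ih]
      ring

/-- the three coordinate words of a_n are t_n, (N(N+1)N)^{2ⁿ}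
and φ₁(t_n). -/
theorem aword_coordinates (N : ℕ) (M : ℕ) (hM : M = 3 * N + 1) (n : ℕ) :
    (aword N n).map Prod.fst = tword N n ∧
      (aword N n).map Prod.snd = List.flatten (List.replicate (2 ^ n) [N, N + 1, N]) ∧
      (aword N n).map (fun p => M - p.1 - p.2) = phi1 N (tword N n) := by
  subst hM
  have hg := good_tword N n
  rw [aword_pairify]
  exact ⟨pairify_fst hg, pairify_snd hg _ (tword_length N n), pairify_third hg⟩
end
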